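/- (Interiority Lemma, point version) Suppose A, B, C, O are compact convex sets in the plane, any two of which intersect, and suppose the triples (A,B,O), (B,C,O), (C,A,O) each have empty triple intersection and orientation +1. Then A ∩ B ∩ C = ∅ and the orientation of (A,B,C) is +1. -/

import Mathlib

noncomputable def det2 (p q r : ℝ × ℝ) : ℝ :=
  (q.1 - p.1) * (r.2 - p.2) - (q.2 - p.2) * (r.1 - p.1)

noncomputable def ptOrient (p q r : ℝ × ℝ) : ℝ := Real.sign (det2 p q r)

lemma sign_eq_one_iff_pos (r : ℝ) : Real.sign r = 1 ↔ 0 < r := by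
  constructor
  · intro h
    rcases lt_trichotomy r 0 with h'|h'|h'
    · rw [Real.sign_of_neg h'] at h; norm_num at h
    · rw [h', Real.sign_zero] at h; norm_num at h
    · exact h'
  · exact Real.sign_of_pos

lemma mem_of_orient {O : Set (ℝ × ℝ)} (hO : Convex ℝ O) {a b c w : ℝ × ℝ}
    (ha : a ∈ O) (hb : b ∈ O) (hc : c ∈ O)
    (h1 : 0 < det2 b a w) (h2 : 0 < det2 c b w) (h3 : 0 < det2 a c w) :
    w ∈ O := by
  set d1 := det2 b a w with hd1
  set d2 := det2 c b w with hd2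
  set d3 := det2 a c w with hd3
  have hS : 0 < d1 + d2 + d3 := by positivity
  have h31 : 0 < d3 + d1 := by positivity
  have h31' : d3 + d1 ≠ 0 := ne_of_gt h31
  set S := d1 + d2 + d3 with hSdef
  have hm : (d3 / (d3 + d1)) • b + (d1 / (d3 + d1)) • c ∈ O := by
    refine hO hb hc (by positivity) (by positivity) ?_
    field_simp
  set m := (d3 / (d3 + d1)) • b + (d1 / (d3 + d1)) • c with hmdef
  have hw : (d2 / S) • a + ((d3 + d1) / S) • m ∈ O := by
    refine hO ha hm (by positivity) (by positivity) ?_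
    field_simp
    ring
  have key : w = (d2 / S) • a + ((d3 + d1) / S) • m := by
    have e1 : S * w.1 = d2 * a.1 + d3 * b.1 + d1 * c.1 := by
      simp only [hSdef, hd1, hd2, hd3, det2]; ring
    have e2 : S * w.2 = d2 * a.2 + d3 * b.2 + d1 * c.2 := by
      simp only [hSdef, hd1, hd2, hd3, det2]; ring
    have : w = ((d2 * a.1 + d3 * b.1 + d1 * c.1) / S, (d2 * a.2 + d3 * b.2 + d1 * c.2) / S) := by
      apply Prod.ext
      · field_simp [mul_comm] at e1 ⊢
        linarith [e1]
      · field_simp [mul_comm] at e2 ⊢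
        linarith [e2]
    rw [this]
    apply Prod.ext <;>
      simp only [hmdef, Prod.smul_fst, Prod.smul_snd, Prod.fst_add, Prod.snd_add, smul_eq_mul] <;>
      field_simp <;> ring
  rw [key]; exact hw

lemma collinear_middle {x y z : ℝ × ℝ} (h : det2 x y z = 0) :
    x ∈ segment ℝ y z ∨ y ∈ segment ℝ x z ∨ z ∈ segment ℝ x y := by
  by_cases hyx : y = x
  · exact Or.inr (Or.inl (hyx ▸ left_mem_segment ℝ x z))
  · have hex : ∃ t : ℝ, z.1 - x.1 = t * (y.1 - x.1) ∧ z.2 - x.2 = t * (y.2 - x.2) := by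
      by_cases h1 : y.1 - x.1 ≠ 0
      · refine ⟨(z.1 - x.1) / (y.1 - x.1), by field_simp, ?_⟩
        simp only [det2] at h
        field_simp
        nlinarith [h]
      · push_neg at h1
        have h2 : y.2 - x.2 ≠ 0 := by
          intro h2
          apply hyx
          apply Prod.ext <;> [linarith; linarith]
        have hz1 : z.1 - x.1 = 0 := by
          simp only [det2] at h
          rw [h1] at h
          have := mul_eq_zero.1 (by linarith : (y.2 - x.2) * (z.1 - x.1) = 0)
          tauto
        exact ⟨(z.2 - x.2) / (y.2 - x.2), by rw [hz1, h1, mul_zero], by field_simp⟩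
    obtain ⟨t, ht1, ht2⟩ := hex
    rcases le_or_gt t 0 with htle | htpos
    · have h1t : (0:ℝ) < 1 - t := by linarith
      refine Or.inl ⟨-t / (1 - t), 1 / (1 - t),
        div_nonneg (by linarith) h1t.le, by positivity, ?_, ?_⟩
      · rw [← add_div, div_eq_one_iff_eq h1t.ne']; ring
      · apply Prod.ext <;>
          simp only [Prod.smul_fst, Prod.smul_snd, Prod.fst_add, Prod.snd_add, smul_eq_mul] <;>
          field_simp <;> nlinarith [ht1, ht2]
    rcases le_or_gt t 1 with htle1 | htgt
    · refine Or.inr (Or.inr ⟨1 - t, t, by linarith, by linarith, by ring, ?_⟩)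
      apply Prod.ext <;>
        simp only [Prod.smul_fst, Prod.smul_snd, Prod.fst_add, Prod.snd_add, smul_eq_mul] <;>
        nlinarith [ht1, ht2]
    · have ht0 : (0:ℝ) < t := by linarith
      refine Or.inr (Or.inl ⟨1 - 1/t, 1/t, by
          have : 1/t ≤ 1 := by rw [div_le_one ht0]; linarith
          linarith, by positivity, by ring, ?_⟩)
      apply Prod.ext <;>
        simp only [Prod.smul_fst, Prod.smul_snd, Prod.fst_add, Prod.snd_add, smul_eq_mul] <;>
        field_simp <;> nlinarith [ht1, ht2]


lemma det2_cyc (p q r : ℝ × ℝ) : det2 p q r = det2 q r p := by simp only [det2]; ring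

lemma det2_swap13 (p q r : ℝ × ℝ) : det2 p q r = -det2 r q p := by simp only [det2]; ring

lemma param_mem_segment {a d : ℝ × ℝ} {s u t : ℝ} (hsu : s ≤ u) (hut : u ≤ t) (hst : s < t) :
    a + u • d ∈ segment ℝ (a + s • d) (a + t • d) := by
  have hts : (0:ℝ) < t - s := by linarith
  refine ⟨(t - u)/(t - s), (u - s)/(t - s), div_nonneg (by linarith) hts.le,
    div_nonneg (by linarith) hts.le, ?_, ?_⟩
  · rw [← add_div, div_eq_one_iff_eq hts.ne']; ring
  · apply Prod.ext <;>
      simp only [Prod.smul_fst, Prod.smul_snd, Prod.fst_add, Prod.snd_add, smul_eq_mul] <;>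
      field_simp <;> ring

lemma combo_mem_segment {u v : ℝ × ℝ} {s : ℝ} (h0 : 0 ≤ s) (h1 : s ≤ 1) :
    u + s • (v - u) ∈ segment ℝ u v := by
  refine ⟨1 - s, s, by linarith, h0, by ring, ?_⟩
  apply Prod.ext <;>
    simp only [Prod.smul_fst, Prod.smul_snd, Prod.fst_add, Prod.snd_add, Prod.fst_sub,
      Prod.snd_sub, smul_eq_mul] <;> ring

lemma exists_param {a z p : ℝ × ℝ} (hz : z ≠ a) (h : det2 a z p = 0) :
    ∃ t : ℝ, p = a + t • (z - a) := by
  by_cases h1 : z.1 - a.1 ≠ 0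
  · refine ⟨(p.1 - a.1)/(z.1 - a.1), ?_⟩
    apply Prod.ext <;>
      simp only [Prod.smul_fst, Prod.smul_snd, Prod.fst_add, Prod.snd_add, Prod.fst_sub,
        Prod.snd_sub, smul_eq_mul]
    · field_simp; ring
    · simp only [det2] at h
      field_simp
      nlinarith [h]
  · push_neg at h1
    have h2 : z.2 - a.2 ≠ 0 := by
      intro h2; apply hz; apply Prod.ext <;> [linarith; linarith]
    refine ⟨(p.2 - a.2)/(z.2 - a.2), ?_⟩
    apply Prod.ext <;>
      simp only [Prod.smul_fst, Prod.smul_snd, Prod.fst_add, Prod.snd_add, Prod.fst_sub,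
        Prod.snd_sub, smul_eq_mul]
    · simp only [det2] at h
      rw [h1] at h ⊢
      have : (z.2 - a.2) * (p.1 - a.1) = 0 := by linarith
      rcases mul_eq_zero.1 this with h'|h'
      · exact absurd h' h2
      · field_simp; linarith
    · field_simp; ring

lemma crossing_gen {a z u v : ℝ × ℝ} (hu : 0 < det2 a z u) (hv : det2 a z v < 0) :
    ∃ s : ℝ, 0 < s ∧ s < 1 ∧ det2 a z (u + s • (v - u)) = 0 := by
  have hD : 0 < det2 a z u - det2 a z v := by linarith
  refine ⟨det2 a z u / (det2 a z u - det2 a z v), div_pos hu hD, ?_, ?_⟩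
  · rw [div_lt_one hD]; linarith
  · have expand : det2 a z (u + (det2 a z u / (det2 a z u - det2 a z v)) • (v - u))
        = det2 a z u + (det2 a z u / (det2 a z u - det2 a z v)) * (det2 a z v - det2 a z u) := by
      simp only [det2, Prod.smul_fst, Prod.smul_snd, Prod.fst_add, Prod.snd_add, Prod.fst_sub,
        Prod.snd_sub, smul_eq_mul]
      ring
    rw [expand]
    field_simp
    ring

lemma pt0 (a d : ℝ × ℝ) : a + (0:ℝ) • d = a := by simp

lemma pt1 (a z : ℝ × ℝ) : a + (1:ℝ) • (z - a) = z := by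
  apply Prod.ext <;> simp

lemma GLa {A B C O : Set (ℝ × ℝ)}
    (hA : Convex ℝ A) (hB : Convex ℝ B) (hC : Convex ℝ C) (hO : Convex ℝ O)
    (hAC : (A ∩ C).Nonempty) (hBO : (B ∩ O).Nonempty) (hCO : (C ∩ O).Nonempty)
    (eABO : A ∩ B ∩ O = ∅) (eCAO : C ∩ A ∩ O = ∅) (eABC : A ∩ B ∩ C = ∅)
    (H1 : ∀ b ∈ B ∩ O, ∀ a ∈ A ∩ O, ∀ z ∈ A ∩ B, 0 < det2 b a z)
    (H2 : ∀ c ∈ C ∩ O, ∀ b ∈ B ∩ O, ∀ x ∈ B ∩ C, 0 < det2 c b x)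
    (H3 : ∀ a ∈ A ∩ O, ∀ c ∈ C ∩ O, ∀ y ∈ C ∩ A, 0 < det2 a c y)
    (FNT : ∀ x ∈ B ∩ C, ∀ y ∈ A ∩ C, ∀ z ∈ A ∩ B, det2 x y z < 0) :
    ∀ a ∈ A ∩ O, ∀ z ∈ A ∩ B, ∀ x ∈ B ∩ C, det2 a z x ≠ 0 := by
  intro a ha z hz x hx h0
  have haA : a ∈ A := ha.1
  have haO : a ∈ O := ha.2
  have hzA : z ∈ A := hz.1
  have hzB : z ∈ B := hz.2
  have hxB : x ∈ B := hx.1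
  have hxC : x ∈ C := hx.2
  have hza : z ≠ a := by
    intro h
    exact Set.notMem_empty a (eABO ▸ (⟨h ▸ hz, haO⟩ : a ∈ A ∩ B ∩ O))
  obtain ⟨μ, hμ⟩ := exists_param hza h0
  have sideB : ∀ b ∈ B ∩ O, 0 < det2 a z b := by
    intro b hb
    rw [← det2_cyc]
    exact H1 b hb a ha z hz
  have paramB : ∀ w ∈ B, ∀ t : ℝ, w = a + t • (z - a) → 0 < t := by
    intro w hw t hwt
    by_contra hle
    push_neg at hle
    have hseg := param_mem_segment (a := a) (d := z - a) hle zero_le_one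
      (lt_of_le_of_lt hle one_pos)
    rw [pt0, pt1, ← hwt] at hseg
    have haB : a ∈ B := hB.segment_subset hw hzB hseg
    exact Set.notMem_empty a (eABO ▸ (⟨⟨haA, haB⟩, haO⟩ : a ∈ A ∩ B ∩ O))
  have factStar : ∀ o ∈ O, ∀ s : ℝ, o = a + s • (z - a) → ∀ w ∈ B, ∀ t : ℝ,
      w = a + t • (z - a) → s < t := by
    intro o hoO s hos w hwB t hwt
    by_contra hle
    push_neg at hle
    have ht0 : 0 < t := paramB w hwB t hwt
    rcases le_or_gt t 1 with ht1 | ht1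
    · have hwA : w ∈ A := by
        have hseg := param_mem_segment (a := a) (d := z - a) ht0.le ht1 one_pos
        rw [pt0, pt1, ← hwt] at hseg
        exact hA.segment_subset haA hzA hseg
      have hwO : w ∈ O := by
        have hs0 : 0 < s := lt_of_lt_of_le ht0 hle
        have hseg := param_mem_segment (a := a) (d := z - a) ht0.le hle hs0
        rw [pt0, ← hos, ← hwt] at hseg
        exact hO.segment_subset haO hoO hseg
      exact Set.notMem_empty w (eABO ▸ (⟨⟨hwA, hwB⟩, hwO⟩ : w ∈ A ∩ B ∩ O))
    · have hs1 : 1 < s := lt_of_lt_of_le ht1 hle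
      have hzO : z ∈ O := by
        have hseg := param_mem_segment (a := a) (d := z - a) zero_le_one hs1.le
          (by linarith : (0:ℝ) < s)
        rw [pt0, pt1, ← hos] at hseg
        exact hO.segment_subset haO hoO hseg
      exact Set.notMem_empty z (eABO ▸ (⟨hz, hzO⟩ : z ∈ A ∩ B ∩ O))
  obtain ⟨b₀, hb₀⟩ := hBO
  rcases le_or_gt μ 0 with hμ0 | hμ0
  · -- a ∈ segment x z ⊂ B
    have hseg := param_mem_segment (a := a) (d := z - a) hμ0 zero_le_one
      (lt_of_le_of_lt hμ0 one_pos)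
    rw [pt0, pt1, ← hμ] at hseg
    have haB : a ∈ B := hB.segment_subset hxB hzB hseg
    exact Set.notMem_empty a (eABO ▸ (⟨⟨haA, haB⟩, haO⟩ : a ∈ A ∩ B ∩ O))
  rcases le_or_gt μ 1 with hμ1 | hμ1
  · -- x ∈ segment a z ⊂ A
    have hseg := param_mem_segment (a := a) (d := z - a) hμ0.le hμ1 one_pos
    rw [pt0, pt1, ← hμ] at hseg
    have hxA : x ∈ A := hA.segment_subset haA hzA hseg
    exact Set.notMem_empty x (eABC ▸ (⟨⟨hxA, hxB⟩, hxC⟩ : x ∈ A ∩ B ∩ C))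
  · -- 1 < μ : main degenerate case
    have sideC : ∀ c ∈ C ∩ O, 0 < det2 a z c := by
      intro c hc
      rcases lt_trichotomy (det2 a z c) 0 with hneg | heq | hpos
      · obtain ⟨s', hs'0, hs'1, hcross⟩ := crossing_gen (sideB b₀ hb₀) hneg
        set o₀ := b₀ + s' • (c - b₀) with ho₀def
        have ho₀O : o₀ ∈ O := hO.segment_subset hb₀.2 hc.2 (combo_mem_segment hs'0.le hs'1.le)
        obtain ⟨s₀, hs₀⟩ := exists_param hza hcross
        have hs₀μ : s₀ < μ := factStar o₀ ho₀O s₀ hs₀ x hxB μ hμ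
        have hH2 := H2 c hc b₀ hb₀ x hx
        have E1 : det2 o₀ b₀ x = s' * det2 c b₀ x := by
          rw [ho₀def]
          simp only [det2, Prod.smul_fst, Prod.smul_snd, Prod.fst_add, Prod.snd_add,
            Prod.fst_sub, Prod.snd_sub, smul_eq_mul]
          ring
        have E2 : det2 o₀ b₀ x = -((μ - s₀) * det2 a z b₀) := by
          rw [hs₀, hμ]
          simp only [det2, Prod.smul_fst, Prod.smul_snd, Prod.fst_add, Prod.snd_add,
            Prod.fst_sub, Prod.snd_sub, smul_eq_mul]
          ring
        have P1 : 0 < s' * det2 c b₀ x := mul_pos hs'0 hH2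
        have P2 : 0 < (μ - s₀) * det2 a z b₀ := mul_pos (by linarith) (sideB b₀ hb₀)
        linarith
      · obtain ⟨s_c, hsc⟩ := exists_param hza heq
        have hscμ : s_c < μ := factStar c hc.2 s_c hsc x hxB μ hμ
        have hH2 := H2 c hc b₀ hb₀ x hx
        have E : det2 c b₀ x = -((μ - s_c) * det2 a z b₀) := by
          rw [hsc, hμ]
          simp only [det2, Prod.smul_fst, Prod.smul_snd, Prod.fst_add, Prod.snd_add,
            Prod.fst_sub, Prod.snd_sub, smul_eq_mul]
          ring
        have P : 0 < (μ - s_c) * det2 a z b₀ := mul_pos (by linarith) (sideB b₀ hb₀)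
        linarith
      · exact hpos
    obtain ⟨y₀, hy₀⟩ := hAC
    obtain ⟨c₀, hc₀⟩ := hCO
    have hc₀pos := sideC c₀ hc₀
    have noNegLine : ∀ q ∈ C, ∀ tq : ℝ, q = a + tq • (z - a) → tq < 0 → False := by
      intro q hqC tq hq htq
      have hseg := param_mem_segment (a := a) (d := z - a) htq.le
        (by linarith : (0:ℝ) ≤ μ) (by linarith : tq < μ)
      rw [pt0, ← hq, ← hμ] at hseg
      have haC : a ∈ C := hC.segment_subset hqC hxC hseg
      exact Set.notMem_empty a (eCAO ▸ (⟨⟨haC, haA⟩, haO⟩ : a ∈ C ∩ A ∩ O))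
    have hH3 := H3 a ha c₀ hc₀ y₀ ⟨hy₀.2, hy₀.1⟩
    rcases lt_trichotomy (det2 a z y₀) 0 with hyneg | hyeq | hypos
    · obtain ⟨σ, hσ0, hσ1, hqcross⟩ := crossing_gen hc₀pos hyneg
      set q := c₀ + σ • (y₀ - c₀) with hqdef
      have hqC : q ∈ C := hC.segment_subset hc₀.1 hy₀.2 (combo_mem_segment hσ0.le hσ1.le)
      obtain ⟨tq, htq⟩ := exists_param hza hqcross
      have E1 : det2 a c₀ q = σ * det2 a c₀ y₀ := by
        rw [hqdef]
        simp only [det2, Prod.smul_fst, Prod.smul_snd, Prod.fst_add, Prod.snd_add,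
          Prod.fst_sub, Prod.snd_sub, smul_eq_mul]
        ring
      have E2 : det2 a c₀ q = -(tq * det2 a z c₀) := by
        rw [htq]
        simp only [det2, Prod.smul_fst, Prod.smul_snd, Prod.fst_add, Prod.snd_add,
          Prod.fst_sub, Prod.snd_sub, smul_eq_mul]
        ring
      have htqneg : tq < 0 := by
        by_contra h'
        push_neg at h'
        have P1 : 0 < σ * det2 a c₀ y₀ := mul_pos hσ0 hH3
        have P2 : 0 ≤ tq * det2 a z c₀ := mul_nonneg h' hc₀pos.le
        linarith
      exact noNegLine q hqC tq htq htqneg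
    · obtain ⟨ty, hty⟩ := exists_param hza hyeq
      have E : det2 a c₀ y₀ = -(ty * det2 a z c₀) := by
        rw [hty]
        simp only [det2, Prod.smul_fst, Prod.smul_snd, Prod.fst_add, Prod.snd_add,
          Prod.fst_sub, Prod.snd_sub, smul_eq_mul]
        ring
      have htyneg : ty < 0 := by
        by_contra h'
        push_neg at h'
        have P2 : 0 ≤ ty * det2 a z c₀ := mul_nonneg h' hc₀pos.le
        linarith
      exact noNegLine y₀ hy₀.2 ty hty htyneg
    · have hFNT := FNT x hx y₀ hy₀ z hz
      have E : det2 x y₀ z = (μ - 1) * det2 a z y₀ := by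
        rw [hμ]
        simp only [det2, Prod.smul_fst, Prod.smul_snd, Prod.fst_add, Prod.snd_add,
          Prod.fst_sub, Prod.snd_sub, smul_eq_mul]
        ring
      have P : 0 < (μ - 1) * det2 a z y₀ := mul_pos (by linarith) hypos
      linarith

lemma GLb {A B C O : Set (ℝ × ℝ)}
    (hA : Convex ℝ A) (hB : Convex ℝ B) (hC : Convex ℝ C) (hO : Convex ℝ O)
    (hAB : (A ∩ B).Nonempty) (hAC : (A ∩ C).Nonempty) (hAO : (A ∩ O).Nonempty)
    (hBC : (B ∩ C).Nonempty) (hBO : (B ∩ O).Nonempty) (hCO : (C ∩ O).Nonempty)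
    (eABO : A ∩ B ∩ O = ∅) (eCAO : C ∩ A ∩ O = ∅)
    (H1 : ∀ b ∈ B ∩ O, ∀ a ∈ A ∩ O, ∀ z ∈ A ∩ B, 0 < det2 b a z)
    (H2 : ∀ c ∈ C ∩ O, ∀ b ∈ B ∩ O, ∀ x ∈ B ∩ C, 0 < det2 c b x)
    (H3 : ∀ a ∈ A ∩ O, ∀ c ∈ C ∩ O, ∀ y ∈ C ∩ A, 0 < det2 a c y)
    (FNT : ∀ x ∈ B ∩ C, ∀ y ∈ A ∩ C, ∀ z ∈ A ∩ B, det2 x y z < 0)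
    (Hneg : ∀ a ∈ A ∩ O, ∀ z ∈ A ∩ B, ∀ x ∈ B ∩ C, det2 a z x < 0) : False := by
  obtain ⟨a, ha⟩ := hAO
  obtain ⟨z, hz⟩ := hAB
  obtain ⟨b₀, hb₀⟩ := hBO
  obtain ⟨x₀, hx₀⟩ := hBC
  obtain ⟨c₀, hc₀⟩ := hCO
  obtain ⟨y₀, hy₀⟩ := hAC
  have haA : a ∈ A := ha.1
  have haO : a ∈ O := ha.2
  have hzA : z ∈ A := hz.1
  have hzB : z ∈ B := hz.2
  have hza : z ≠ a := by
    intro h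
    exact Set.notMem_empty a (eABO ▸ (⟨h ▸ hz, haO⟩ : a ∈ A ∩ B ∩ O))
  have sideB : ∀ b ∈ B ∩ O, 0 < det2 a z b := by
    intro b hb
    rw [← det2_cyc]
    exact H1 b hb a ha z hz
  have sideX : ∀ x' ∈ B ∩ C, det2 a z x' < 0 := fun x' hx' => Hneg a ha z hz x' hx'
  have paramB : ∀ w ∈ B, ∀ t : ℝ, w = a + t • (z - a) → 0 < t := by
    intro w hw t hwt
    by_contra hle
    push_neg at hle
    have hseg := param_mem_segment (a := a) (d := z - a) hle zero_le_one
      (lt_of_le_of_lt hle one_pos)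
    rw [pt0, pt1, ← hwt] at hseg
    have haB : a ∈ B := hB.segment_subset hw hzB hseg
    exact Set.notMem_empty a (eABO ▸ (⟨⟨haA, haB⟩, haO⟩ : a ∈ A ∩ B ∩ O))
  have factStar : ∀ o ∈ O, ∀ s : ℝ, o = a + s • (z - a) → ∀ w ∈ B, ∀ t : ℝ,
      w = a + t • (z - a) → s < t := by
    intro o hoO s hos w hwB t hwt
    by_contra hle
    push_neg at hle
    have ht0 : 0 < t := paramB w hwB t hwt
    rcases le_or_gt t 1 with ht1 | ht1
    · have hwA : w ∈ A := by
        have hseg := param_mem_segment (a := a) (d := z - a) ht0.le ht1 one_pos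
        rw [pt0, pt1, ← hwt] at hseg
        exact hA.segment_subset haA hzA hseg
      have hwO : w ∈ O := by
        have hs0 : 0 < s := lt_of_lt_of_le ht0 hle
        have hseg := param_mem_segment (a := a) (d := z - a) ht0.le hle hs0
        rw [pt0, ← hos, ← hwt] at hseg
        exact hO.segment_subset haO hoO hseg
      exact Set.notMem_empty w (eABO ▸ (⟨⟨hwA, hwB⟩, hwO⟩ : w ∈ A ∩ B ∩ O))
    · have hs1 : 1 < s := lt_of_lt_of_le ht1 hle
      have hzO : z ∈ O := by
        have hseg := param_mem_segment (a := a) (d := z - a) zero_le_one hs1.le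
          (by linarith : (0:ℝ) < s)
        rw [pt0, pt1, ← hos] at hseg
        exact hO.segment_subset haO hoO hseg
      exact Set.notMem_empty z (eABO ▸ (⟨hz, hzO⟩ : z ∈ A ∩ B ∩ O))
  -- the anchor point w₀ on the line, inside B
  obtain ⟨s, hs0, hs1, hwcross⟩ := crossing_gen (sideB b₀ hb₀) (sideX x₀ hx₀)
  set w₀ := b₀ + s • (x₀ - b₀) with hw₀def
  have hw₀B : w₀ ∈ B := hB.segment_subset hb₀.1 hx₀.1 (combo_mem_segment hs0.le hs1.le)
  obtain ⟨t₀, ht₀⟩ := exists_param hza hwcross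
  have ht₀pos : 0 < t₀ := paramB w₀ hw₀B t₀ ht₀
  -- C ∩ O is strictly on the positive side
  have sideC : ∀ c ∈ C ∩ O, 0 < det2 a z c := by
    intro c hc
    rcases lt_trichotomy (det2 a z c) 0 with hneg | heq | hpos
    · obtain ⟨s', hs'0, hs'1, hcross⟩ := crossing_gen (sideB b₀ hb₀) hneg
      set o₀ := b₀ + s' • (c - b₀) with ho₀def
      have ho₀O : o₀ ∈ O := hO.segment_subset hb₀.2 hc.2 (combo_mem_segment hs'0.le hs'1.le)
      obtain ⟨s₀, hs₀⟩ := exists_param hza hcross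
      have hs₀t : s₀ < t₀ := factStar o₀ ho₀O s₀ hs₀ w₀ hw₀B t₀ ht₀
      have hH2 := H2 c hc b₀ hb₀ x₀ hx₀
      have E1 : det2 o₀ b₀ w₀ = s' * (s * det2 c b₀ x₀) := by
        rw [ho₀def, hw₀def]
        simp only [det2, Prod.smul_fst, Prod.smul_snd, Prod.fst_add, Prod.snd_add,
          Prod.fst_sub, Prod.snd_sub, smul_eq_mul]
        ring
      have E2 : det2 o₀ b₀ w₀ = -((t₀ - s₀) * det2 a z b₀) := by
        rw [hs₀, ht₀]
        simp only [det2, Prod.smul_fst, Prod.smul_snd, Prod.fst_add, Prod.snd_add,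
          Prod.fst_sub, Prod.snd_sub, smul_eq_mul]
        ring
      have P1 : 0 < s' * (s * det2 c b₀ x₀) := mul_pos hs'0 (mul_pos hs0 hH2)
      have P2 : 0 < (t₀ - s₀) * det2 a z b₀ := mul_pos (by linarith) (sideB b₀ hb₀)
      linarith
    · obtain ⟨s_c, hsc⟩ := exists_param hza heq
      have hsct : s_c < t₀ := factStar c hc.2 s_c hsc w₀ hw₀B t₀ ht₀
      have hH2 := H2 c hc b₀ hb₀ x₀ hx₀
      have E1 : det2 c b₀ w₀ = s * det2 c b₀ x₀ := by
        rw [hw₀def]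
        simp only [det2, Prod.smul_fst, Prod.smul_snd, Prod.fst_add, Prod.snd_add,
          Prod.fst_sub, Prod.snd_sub, smul_eq_mul]
        ring
      have E2 : det2 c b₀ w₀ = -((t₀ - s_c) * det2 a z b₀) := by
        rw [hsc, ht₀]
        simp only [det2, Prod.smul_fst, Prod.smul_snd, Prod.fst_add, Prod.snd_add,
          Prod.fst_sub, Prod.snd_sub, smul_eq_mul]
        ring
      have P1 : 0 < s * det2 c b₀ x₀ := mul_pos hs0 hH2
      have P2 : 0 < (t₀ - s_c) * det2 a z b₀ := mul_pos (by linarith) (sideB b₀ hb₀)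
      linarith
    · exact hpos
  have hc₀pos := sideC c₀ hc₀
  -- the point p on the line through [c₀, x₀]
  obtain ⟨σ', hσ'0, hσ'1, hpcross⟩ := crossing_gen hc₀pos (sideX x₀ hx₀)
  set p := c₀ + σ' • (x₀ - c₀) with hpdef
  have hpC : p ∈ C := hC.segment_subset hc₀.1 hx₀.2 (combo_mem_segment hσ'0.le hσ'1.le)
  obtain ⟨t_p, htpp⟩ := exists_param hza hpcross
  have htp : 0 ≤ t_p := by
    by_contra h'
    push_neg at h'
    have hH2 := H2 c₀ hc₀ b₀ hb₀ x₀ hx₀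
    have hsw : det2 x₀ b₀ c₀ = -det2 c₀ b₀ x₀ := det2_swap13 x₀ b₀ c₀
    have E1 : det2 x₀ w₀ p = (1 - s) * ((1 - σ') * det2 x₀ b₀ c₀) := by
      rw [hw₀def, hpdef]
      simp only [det2, Prod.smul_fst, Prod.smul_snd, Prod.fst_add, Prod.snd_add,
        Prod.fst_sub, Prod.snd_sub, smul_eq_mul]
      ring
    have E2 : det2 x₀ w₀ p = (t₀ - t_p) * (-(det2 a z x₀)) := by
      rw [ht₀, htpp]
      simp only [det2, Prod.smul_fst, Prod.smul_snd, Prod.fst_add, Prod.snd_add,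
        Prod.fst_sub, Prod.snd_sub, smul_eq_mul]
      ring
    have hneg1 : det2 x₀ b₀ c₀ < 0 := by linarith
    have P1 : (1 - s) * ((1 - σ') * det2 x₀ b₀ c₀) < 0 :=
      mul_neg_of_pos_of_neg (by linarith) (mul_neg_of_pos_of_neg (by linarith) hneg1)
    have P2 : 0 < (t₀ - t_p) * (-(det2 a z x₀)) :=
      mul_pos (by linarith) (by linarith [sideX x₀ hx₀])
    linarith
  have noNegC : ∀ q ∈ C, ∀ tq : ℝ, q = a + tq • (z - a) → 0 ≤ tq := by
    intro q hqC tq hq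
    by_contra h'
    push_neg at h'
    have hseg := param_mem_segment (a := a) (d := z - a) h'.le htp (lt_of_lt_of_le h' htp)
    rw [pt0, ← hq, ← htpp] at hseg
    have haC : a ∈ C := hC.segment_subset hqC hpC hseg
    exact Set.notMem_empty a (eCAO ▸ (⟨⟨haC, haA⟩, haO⟩ : a ∈ C ∩ A ∩ O))
  -- A ∩ C is strictly on the positive side
  have sideY : ∀ y ∈ A ∩ C, 0 < det2 a z y := by
    intro y hy
    have hH3 := H3 a ha c₀ hc₀ y ⟨hy.2, hy.1⟩
    rcases lt_trichotomy (det2 a z y) 0 with hyneg | hyeq | hypos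
    · obtain ⟨σ, hσ0, hσ1, hqcross⟩ := crossing_gen hc₀pos hyneg
      set q := c₀ + σ • (y - c₀) with hqdef
      have hqC : q ∈ C := hC.segment_subset hc₀.1 hy.2 (combo_mem_segment hσ0.le hσ1.le)
      obtain ⟨tq, htq⟩ := exists_param hza hqcross
      have E1 : det2 a c₀ q = σ * det2 a c₀ y := by
        rw [hqdef]
        simp only [det2, Prod.smul_fst, Prod.smul_snd, Prod.fst_add, Prod.snd_add,
          Prod.fst_sub, Prod.snd_sub, smul_eq_mul]
        ring
      have E2 : det2 a c₀ q = -(tq * det2 a z c₀) := by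
        rw [htq]
        simp only [det2, Prod.smul_fst, Prod.smul_snd, Prod.fst_add, Prod.snd_add,
          Prod.fst_sub, Prod.snd_sub, smul_eq_mul]
        ring
      have htqge := noNegC q hqC tq htq
      have P1 : 0 < σ * det2 a c₀ y := mul_pos hσ0 hH3
      have P2 : 0 ≤ tq * det2 a z c₀ := mul_nonneg htqge hc₀pos.le
      linarith
    · obtain ⟨ty, hty⟩ := exists_param hza hyeq
      have E : det2 a c₀ y = -(ty * det2 a z c₀) := by
        rw [hty]
        simp only [det2, Prod.smul_fst, Prod.smul_snd, Prod.fst_add, Prod.snd_add,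
          Prod.fst_sub, Prod.snd_sub, smul_eq_mul]
        ring
      have htyge := noNegC y hy.2 ty hty
      have P2 : 0 ≤ ty * det2 a z c₀ := mul_nonneg htyge hc₀pos.le
      linarith
    · exact hypos
  -- endgame
  have hy₀pos := sideY y₀ hy₀
  obtain ⟨τ', hτ'0, hτ'1, hrcross⟩ := crossing_gen hy₀pos (sideX x₀ hx₀)
  set r := y₀ + τ' • (x₀ - y₀) with hrdef
  have hrC : r ∈ C := hC.segment_subset hy₀.2 hx₀.2 (combo_mem_segment hτ'0.le hτ'1.le)
  obtain ⟨t_r, htr⟩ := exists_param hza hrcross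
  have htr0 : 0 ≤ t_r := noNegC r hrC t_r htr
  have hFNT := FNT x₀ hx₀ y₀ hy₀ z hz
  have E1 : det2 x₀ r z = (1 - τ') * det2 x₀ y₀ z := by
    rw [hrdef]
    simp only [det2, Prod.smul_fst, Prod.smul_snd, Prod.fst_add, Prod.snd_add,
      Prod.fst_sub, Prod.snd_sub, smul_eq_mul]
    ring
  have E2 : det2 x₀ r z = (1 - t_r) * det2 a z x₀ := by
    rw [htr]
    simp only [det2, Prod.smul_fst, Prod.smul_snd, Prod.fst_add, Prod.snd_add,
      Prod.fst_sub, Prod.snd_sub, smul_eq_mul]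
    ring
  have P1 : (1 - τ') * det2 x₀ y₀ z < 0 := mul_neg_of_pos_of_neg (by linarith) hFNT
  have htr1 : t_r < 1 := by
    by_contra h'
    push_neg at h'
    have P2 : 0 ≤ (1 - t_r) * det2 a z x₀ := by
      have := mul_nonneg (by linarith : (0:ℝ) ≤ t_r - 1)
        (by linarith [sideX x₀ hx₀] : (0:ℝ) ≤ -det2 a z x₀)
      nlinarith
    linarith
  have hseg := param_mem_segment (a := a) (d := z - a) htr0 htr1.le one_pos
  rw [pt0, pt1, ← htr] at hseg
  have hrA : r ∈ A := hA.segment_subset haA hzA hseg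
  have := sideY r ⟨hrA, hrC⟩
  have hr0 : det2 a z r = 0 := hrcross
  linarith

lemma det2_swap12 (p q r : ℝ × ℝ) : det2 p q r = -det2 q p r := by simp only [det2]; ring

lemma GLpos {A B C O : Set (ℝ × ℝ)}
    (hA : Convex ℝ A) (hB : Convex ℝ B) (hC : Convex ℝ C) (hO : Convex ℝ O)
    (hAB : (A ∩ B).Nonempty) (hAC : (A ∩ C).Nonempty) (hAO : (A ∩ O).Nonempty)
    (hBC : (B ∩ C).Nonempty) (hBO : (B ∩ O).Nonempty) (hCO : (C ∩ O).Nonempty)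
    (eABO : A ∩ B ∩ O = ∅) (eCAO : C ∩ A ∩ O = ∅) (eABC : A ∩ B ∩ C = ∅)
    (H1 : ∀ b ∈ B ∩ O, ∀ a ∈ A ∩ O, ∀ z ∈ A ∩ B, 0 < det2 b a z)
    (H2 : ∀ c ∈ C ∩ O, ∀ b ∈ B ∩ O, ∀ x ∈ B ∩ C, 0 < det2 c b x)
    (H3 : ∀ a ∈ A ∩ O, ∀ c ∈ C ∩ O, ∀ y ∈ C ∩ A, 0 < det2 a c y)
    (FNT : ∀ x ∈ B ∩ C, ∀ y ∈ A ∩ C, ∀ z ∈ A ∩ B, det2 x y z < 0) :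
    ∀ a ∈ A ∩ O, ∀ z ∈ A ∩ B, ∀ x ∈ B ∩ C, 0 < det2 a z x := by
  have hnz := GLa hA hB hC hO hAC hBO hCO eABO eCAO eABC H1 H2 H3 FNT
  by_contra hcon
  push_neg at hcon
  obtain ⟨a₁, ha₁, z₁, hz₁, x₁, hx₁, hle⟩ := hcon
  have hlt : det2 a₁ z₁ x₁ < 0 :=
    lt_of_le_of_ne hle (hnz a₁ ha₁ z₁ hz₁ x₁ hx₁)
  have Hneg : ∀ a ∈ A ∩ O, ∀ z ∈ A ∩ B, ∀ x ∈ B ∩ C, det2 a z x < 0 := by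
    intro a ha z hz x hx
    rcases lt_trichotomy (det2 a z x) 0 with h' | h' | h'
    · exact h'
    · exact absurd h' (hnz a ha z hz x hx)
    · exfalso
      have hKconv : Convex ℝ ((A ∩ O) ×ˢ ((A ∩ B) ×ˢ (B ∩ C))) :=
        (hA.inter hO).prod ((hA.inter hB).prod (hB.inter hC))
      have hf : Continuous (fun p : (ℝ×ℝ)×(ℝ×ℝ)×(ℝ×ℝ) => det2 p.1 p.2.1 p.2.2) := by
        unfold det2; fun_prop
      have hmem1 : ((a₁, (z₁, x₁)) : (ℝ×ℝ)×(ℝ×ℝ)×(ℝ×ℝ)) ∈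
          (A ∩ O) ×ˢ ((A ∩ B) ×ˢ (B ∩ C)) := ⟨ha₁, hz₁, hx₁⟩
      have hmem2 : ((a, (z, x)) : (ℝ×ℝ)×(ℝ×ℝ)×(ℝ×ℝ)) ∈
          (A ∩ O) ×ˢ ((A ∩ B) ×ˢ (B ∩ C)) := ⟨ha, hz, hx⟩
      obtain ⟨w, hwK, hw0⟩ := hKconv.isPreconnected.intermediate_value₂ hmem1 hmem2
        hf.continuousOn (continuousOn_const (c := (0:ℝ))) hlt.le h'.le
      exact hnz w.1 hwK.1 w.2.1 hwK.2.1 w.2.2 hwK.2.2 hw0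
  exact GLb hA hB hC hO hAB hAC hAO hBC hBO hCO eABO eCAO H1 H2 H3 FNT Hneg

theorem stmt_3 (A B C O : Set (ℝ × ℝ))
    (hAc : IsCompact A) (hBc : IsCompact B) (hCc : IsCompact C) (hOc : IsCompact O)
    (hA : Convex ℝ A) (hB : Convex ℝ B) (hC : Convex ℝ C) (hO : Convex ℝ O)
    (hAB : (A ∩ B).Nonempty) (hAC : (A ∩ C).Nonempty) (hAO : (A ∩ O).Nonempty)
    (hBC : (B ∩ C).Nonempty) (hBO : (B ∩ O).Nonempty) (hCO : (C ∩ O).Nonempty)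
    (hABO : A ∩ B ∩ O = ∅) (hBCO : B ∩ C ∩ O = ∅) (hCAO : C ∩ A ∩ O = ∅)
    (oABO : ∀ x ∈ B ∩ O, ∀ y ∈ A ∩ O, ∀ z ∈ A ∩ B, ptOrient x y z = 1)
    (oBCO : ∀ x ∈ C ∩ O, ∀ y ∈ B ∩ O, ∀ z ∈ B ∩ C, ptOrient x y z = 1)
    (oCAO : ∀ x ∈ A ∩ O, ∀ y ∈ C ∩ O, ∀ z ∈ C ∩ A, ptOrient x y z = 1) :
    A ∩ B ∩ C = ∅ ∧
      ∀ x ∈ B ∩ C, ∀ y ∈ A ∩ C, ∀ z ∈ A ∩ B, ptOrient x y z = 1 := by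
  have O1 : ∀ x ∈ B ∩ O, ∀ y ∈ A ∩ O, ∀ z ∈ A ∩ B, 0 < det2 x y z :=
    fun x hx y hy z hz => (sign_eq_one_iff_pos _).1 (oABO x hx y hy z hz)
  have O2 : ∀ x ∈ C ∩ O, ∀ y ∈ B ∩ O, ∀ z ∈ B ∩ C, 0 < det2 x y z :=
    fun x hx y hy z hz => (sign_eq_one_iff_pos _).1 (oBCO x hx y hy z hz)
  have O3 : ∀ x ∈ A ∩ O, ∀ y ∈ C ∩ O, ∀ z ∈ C ∩ A, 0 < det2 x y z :=
    fun x hx y hy z hz => (sign_eq_one_iff_pos _).1 (oCAO x hx y hy z hz)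
  -- Step 1 : A ∩ B ∩ C = ∅
  have hABC : A ∩ B ∩ C = ∅ := by
    rw [Set.eq_empty_iff_forall_notMem]
    intro w hw
    obtain ⟨a, haA, haO⟩ := hAO
    obtain ⟨b, hbB, hbO⟩ := hBO
    obtain ⟨c, hcC, hcO⟩ := hCO
    have h1 := O1 b ⟨hbB, hbO⟩ a ⟨haA, haO⟩ w hw.1
    have h2 := O2 c ⟨hcC, hcO⟩ b ⟨hbB, hbO⟩ w ⟨hw.1.2, hw.2⟩
    have h3 := O3 a ⟨haA, haO⟩ c ⟨hcC, hcO⟩ w ⟨hw.2, hw.1.1⟩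
    have hwO : w ∈ O := mem_of_orient hO haO hbO hcO h1 h2 h3
    exact Set.notMem_empty w (hABO ▸ (⟨hw.1, hwO⟩ : w ∈ A ∩ B ∩ O))
  -- Step 2 : no degenerate target triple
  have hnz : ∀ x ∈ B ∩ C, ∀ y ∈ A ∩ C, ∀ z ∈ A ∩ B, det2 x y z ≠ 0 := by
    intro x hx y hy z hz h0
    rcases collinear_middle h0 with h | h | h
    · have hh : x ∈ A := hA.segment_subset hy.1 hz.1 h
      exact Set.notMem_empty x (hABC ▸ (⟨⟨hh, hx.1⟩, hx.2⟩ : x ∈ A ∩ B ∩ C))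
    · have hh : y ∈ B := hB.segment_subset hx.1 hz.2 h
      exact Set.notMem_empty y (hABC ▸ (⟨⟨hy.1, hh⟩, hy.2⟩ : y ∈ A ∩ B ∩ C))
    · have hh : z ∈ C := hC.segment_subset hx.2 hy.2 h
      exact Set.notMem_empty z (hABC ▸ (⟨hz, hh⟩ : z ∈ A ∩ B ∩ C))
  -- Step 3 : positivity of all target triples
  have POS : ∀ x ∈ B ∩ C, ∀ y ∈ A ∩ C, ∀ z ∈ A ∩ B, 0 < det2 x y z := by
    by_contra hcon
    push_neg at hcon
    obtain ⟨x₁, hx₁, y₁, hy₁, z₁, hz₁, hle⟩ := hcon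
    have hlt : det2 x₁ y₁ z₁ < 0 := lt_of_le_of_ne hle (hnz x₁ hx₁ y₁ hy₁ z₁ hz₁)
    have FNT : ∀ x ∈ B ∩ C, ∀ y ∈ A ∩ C, ∀ z ∈ A ∩ B, det2 x y z < 0 := by
      intro x hx y hy z hz
      rcases lt_trichotomy (det2 x y z) 0 with h' | h' | h'
      · exact h'
      · exact absurd h' (hnz x hx y hy z hz)
      · exfalso
        have hKconv : Convex ℝ ((B ∩ C) ×ˢ ((A ∩ C) ×ˢ (A ∩ B))) :=
          (hB.inter hC).prod ((hA.inter hC).prod (hA.inter hB))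
        have hf : Continuous (fun p : (ℝ×ℝ)×(ℝ×ℝ)×(ℝ×ℝ) => det2 p.1 p.2.1 p.2.2) := by
          unfold det2; fun_prop
        have hmem1 : ((x₁, (y₁, z₁)) : (ℝ×ℝ)×(ℝ×ℝ)×(ℝ×ℝ)) ∈
            (B ∩ C) ×ˢ ((A ∩ C) ×ˢ (A ∩ B)) := ⟨hx₁, hy₁, hz₁⟩
        have hmem2 : ((x, (y, z)) : (ℝ×ℝ)×(ℝ×ℝ)×(ℝ×ℝ)) ∈
            (B ∩ C) ×ˢ ((A ∩ C) ×ˢ (A ∩ B)) := ⟨hx, hy, hz⟩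
        obtain ⟨w, hwK, hw0⟩ := hKconv.isPreconnected.intermediate_value₂ hmem1 hmem2
          hf.continuousOn (continuousOn_const (c := (0:ℝ))) hlt.le h'.le
        exact hnz w.1 hwK.1 w.2.1 hwK.2.1 w.2.2 hwK.2.2 hw0
    have G1 := GLpos hA hB hC hO hAB hAC hAO hBC hBO hCO hABO hCAO hABC O1 O2 O3 FNT
    -- swapped system (B, A, O ; C)
    have hBA : (B ∩ A).Nonempty := ⟨hAB.choose, hAB.choose_spec.2, hAB.choose_spec.1⟩
    have hOC : (O ∩ C).Nonempty := ⟨hCO.choose, hCO.choose_spec.2, hCO.choose_spec.1⟩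
    have eBAC : B ∩ A ∩ C = ∅ := Set.eq_empty_iff_forall_notMem.2
      (fun w hw => Set.notMem_empty w (hABC ▸ (⟨⟨hw.1.2, hw.1.1⟩, hw.2⟩ : w ∈ A ∩ B ∩ C)))
    have eOBC : O ∩ B ∩ C = ∅ := Set.eq_empty_iff_forall_notMem.2
      (fun w hw => Set.notMem_empty w (hBCO ▸ (⟨⟨hw.1.2, hw.2⟩, hw.1.1⟩ : w ∈ B ∩ C ∩ O)))
    have eBAO : B ∩ A ∩ O = ∅ := Set.eq_empty_iff_forall_notMem.2
      (fun w hw => Set.notMem_empty w (hABO ▸ (⟨⟨hw.1.2, hw.1.1⟩, hw.2⟩ : w ∈ A ∩ B ∩ O)))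
    have H1' : ∀ y' ∈ A ∩ C, ∀ x' ∈ B ∩ C, ∀ z' ∈ B ∩ A, 0 < det2 y' x' z' := by
      intro y' hy' x' hx' z' hz'
      have hneg := FNT x' hx' y' hy' z' ⟨hz'.2, hz'.1⟩
      rw [det2_swap12 y' x' z']
      linarith
    have H2' : ∀ c' ∈ O ∩ C, ∀ y' ∈ A ∩ C, ∀ a' ∈ A ∩ O, 0 < det2 c' y' a' := by
      intro c' hc' y' hy' a' ha'
      have hh := O3 a' ha' c' ⟨hc'.2, hc'.1⟩ y' ⟨hy'.2, hy'.1⟩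
      rw [det2_cyc c' y' a', det2_cyc y' a' c']
      exact hh
    have H3' : ∀ x' ∈ B ∩ C, ∀ c' ∈ O ∩ C, ∀ b' ∈ O ∩ B, 0 < det2 x' c' b' := by
      intro x' hx' c' hc' b' hb'
      have hh := O2 c' ⟨hc'.2, hc'.1⟩ b' ⟨hb'.2, hb'.1⟩ x' hx'
      rw [det2_cyc x' c' b']
      exact hh
    have FNT' : ∀ a' ∈ A ∩ O, ∀ b' ∈ B ∩ O, ∀ z' ∈ B ∩ A, det2 a' b' z' < 0 := by
      intro a' ha' b' hb' z' hz'
      have hh := O1 b' hb' a' ha' z' ⟨hz'.2, hz'.1⟩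
      rw [det2_swap12 a' b' z']
      linarith
    have G2 := GLpos hB hA hO hC hBA hBO hBC hAO hAC hOC eBAC eOBC eBAO H1' H2' H3' FNT'
    obtain ⟨a, haA, haO⟩ := hAO
    obtain ⟨z, hzA, hzB⟩ := hAB
    obtain ⟨x, hxB, hxC⟩ := hBC
    have g1 := G1 a ⟨haA, haO⟩ z ⟨hzA, hzB⟩ x ⟨hxB, hxC⟩
    have g2 := G2 x ⟨hxB, hxC⟩ z ⟨hzB, hzA⟩ a ⟨haA, haO⟩
    rw [det2_swap13 x z a] at g2
    linarith
  exact ⟨hABC, fun x hx y hy z hz => (sign_eq_one_iff_pos _).2 (POS x hx y hy z hz)⟩
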